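/- For a nontrivial real Banach space X: X has the strong diameter 2 property if and only if the dual X* is octahedral. -/

import Mathlib

open Metric Set

noncomputable section

/-- A slice of the closed unit ball determined by `f ∈ S_{X*}` and `α > 0` is
`{x ∈ B_X : f x > 1 - α}`.  `X` has the local diameter 2 property if every slice
of `B_X` has diameter 2. -/
def LocalDiameterTwoProp (X : Type*) [NormedAddCommGroup X] [NormedSpace ℝ X] : Prop :=
  ∀ f : X →L[ℝ] ℝ, ‖f‖ = 1 → ∀ α : ℝ, 0 < α →
    Metric.diam {x : X | ‖x‖ ≤ 1 ∧ 1 - α < f x} = 2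

/-- `X` has the diameter 2 property if every nonempty relatively weakly open
subset of `B_X` has diameter 2. -/
def DiameterTwoProp (X : Type*) [NormedAddCommGroup X] [NormedSpace ℝ X] : Prop :=
  ∀ U : Set (WeakSpace ℝ X), IsOpen U →
    {x : X | ‖x‖ ≤ 1 ∧ toWeakSpace ℝ X x ∈ U}.Nonempty →
    Metric.diam {x : X | ‖x‖ ≤ 1 ∧ toWeakSpace ℝ X x ∈ U} = 2

/-- `X` has the strong diameter 2 property if every convex combination of slices
of `B_X` has diameter 2. -/
def StrongDiameterTwoProp (X : Type*) [NormedAddCommGroup X] [NormedSpace ℝ X] : Prop :=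
  ∀ (n : ℕ) (lam : Fin n → ℝ) (f : Fin n → X →L[ℝ] ℝ) (α : Fin n → ℝ),
    (∀ i, 0 ≤ lam i) → (∑ i, lam i) = 1 → (∀ i, ‖f i‖ = 1) → (∀ i, 0 < α i) →
    Metric.diam {x : X | ∃ g : Fin n → X,
      (∀ i, ‖g i‖ ≤ 1 ∧ 1 - α i < f i (g i)) ∧ x = ∑ i, lam i • g i} = 2

/-- The dual of `X` has the weak* local diameter 2 property if every weak* slice
`{f ∈ B_{X*} : f x > 1 - α}` (with `x ∈ S_X`, `α > 0`) has diameter 2. -/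
def WStarLocalDiameterTwoProp (X : Type*) [NormedAddCommGroup X] [NormedSpace ℝ X] : Prop :=
  ∀ x : X, ‖x‖ = 1 → ∀ α : ℝ, 0 < α →
    Metric.diam {f : X →L[ℝ] ℝ | ‖f‖ ≤ 1 ∧ 1 - α < f x} = 2

/-- The dual of `X` has the weak* diameter 2 property if every nonempty relatively
weak* open subset of `B_{X*}` has diameter 2. -/
def WStarDiameterTwoProp (X : Type*) [NormedAddCommGroup X] [NormedSpace ℝ X] : Prop :=
  ∀ U : Set (WeakDual ℝ X), IsOpen U →
    {f : X →L[ℝ] ℝ | ‖f‖ ≤ 1 ∧ StrongDual.toWeakDual f ∈ U}.Nonempty →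
    Metric.diam {f : X →L[ℝ] ℝ | ‖f‖ ≤ 1 ∧ StrongDual.toWeakDual f ∈ U} = 2

/-- The dual of `X` has the weak* strong diameter 2 property if every convex
combination of weak* slices of `B_{X*}` has diameter 2. -/
def WStarStrongDiameterTwoProp (X : Type*) [NormedAddCommGroup X] [NormedSpace ℝ X] : Prop :=
  ∀ (n : ℕ) (lam : Fin n → ℝ) (x : Fin n → X) (α : Fin n → ℝ),
    (∀ i, 0 ≤ lam i) → (∑ i, lam i) = 1 → (∀ i, ‖x i‖ = 1) → (∀ i, 0 < α i) →
    Metric.diam {f : X →L[ℝ] ℝ | ∃ g : Fin n → (X →L[ℝ] ℝ),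
      (∀ i, ‖g i‖ ≤ 1 ∧ 1 - α i < g i (x i)) ∧ f = ∑ i, lam i • g i} = 2

/-- `X` is locally octahedral. -/
def LocallyOctahedral (X : Type*) [NormedAddCommGroup X] [NormedSpace ℝ X] : Prop :=
  ∀ x : X, ∀ ε : ℝ, 0 < ε → ∃ y : X, ‖y‖ = 1 ∧
    ∀ s : ℝ, (1 - ε) * (|s| * ‖x‖ + ‖y‖) ≤ ‖s • x + y‖

/-- `X` is weakly octahedral. -/
def WeaklyOctahedral (X : Type*) [NormedAddCommGroup X] [NormedSpace ℝ X] : Prop :=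
  ∀ E : Subspace ℝ X, FiniteDimensional ℝ E → ∀ f : X →L[ℝ] ℝ, ‖f‖ ≤ 1 →
    ∀ ε : ℝ, 0 < ε → ∃ y : X, ‖y‖ = 1 ∧
      ∀ x ∈ E, (1 - ε) * (|f x| + ‖y‖) ≤ ‖x + y‖

/-- The norm on `X` is octahedral. -/
def Octahedral (X : Type*) [NormedAddCommGroup X] [NormedSpace ℝ X] : Prop :=
  ∀ E : Subspace ℝ X, FiniteDimensional ℝ E → ∀ ε : ℝ, 0 < ε →
    ∃ y : X, ‖y‖ = 1 ∧ ∀ x ∈ E, (1 - ε) * (‖x‖ + ‖y‖) ≤ ‖x + y‖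


section Aux

variable {X : Type*} [NormedAddCommGroup X] [NormedSpace ℝ X]

lemma aux_apply_le_one {g : X →L[ℝ] ℝ} (hg : ‖g‖ ≤ 1) {x : X} (hx : ‖x‖ ≤ 1) : g x ≤ 1 := by
  calc g x ≤ |g x| := le_abs_self _
    _ = ‖g x‖ := (Real.norm_eq_abs _).symm
    _ ≤ ‖g‖ * ‖x‖ := g.le_opNorm x
    _ ≤ 1 * 1 := mul_le_mul hg hx (norm_nonneg _) zero_le_one
    _ = 1 := one_mul 1

lemma aux_neg_one_le {g : X →L[ℝ] ℝ} (hg : ‖g‖ ≤ 1) {x : X} (hx : ‖x‖ ≤ 1) : -1 ≤ g x := by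
  have h := aux_apply_le_one hg (x := -x) (by simpa using hx)
  rw [map_neg] at h
  linarith

lemma aux_exists_far {S : Set X} (hd : Metric.diam S = 2) {r : ℝ} (hr : 0 ≤ r) (hr2 : r < 2) :
    ∃ p ∈ S, ∃ q ∈ S, r < dist p q := by
  by_contra hcon
  push_neg at hcon
  have := Metric.diam_le_of_forall_dist_le hr hcon
  rw [hd] at this
  linarith

lemma aux_combo_norm_le {n : ℕ} {lam : Fin n → ℝ} {gg : Fin n → X}
    (hlam : ∀ i, 0 ≤ lam i) (hsum : ∑ i, lam i = 1) (hg : ∀ i, ‖gg i‖ ≤ 1) :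
    ‖∑ i, lam i • gg i‖ ≤ 1 := by
  calc ‖∑ i, lam i • gg i‖ ≤ ∑ i, ‖lam i • gg i‖ := norm_sum_le _ _
    _ ≤ ∑ i, lam i := by
        refine Finset.sum_le_sum fun i _ => ?_
        rw [norm_smul, Real.norm_eq_abs, abs_of_nonneg (hlam i)]
        exact mul_le_of_le_one_right (hlam i) (hg i)
    _ = 1 := hsum

lemma aux_diam_eq_two (S : Set X) (hsub : ∀ x ∈ S, ‖x‖ ≤ 1)
    (h : ∀ η : ℝ, 0 < η → ∃ a ∈ S, ∃ b ∈ S, 2 - η ≤ dist a b) :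
    Metric.diam S = 2 := by
  have hb : Bornology.IsBounded S :=
    (Metric.isBounded_closedBall (x := (0 : X)) (r := 1)).subset
      fun x hx => by simpa [Metric.mem_closedBall, dist_zero_right] using hsub x hx
  refine le_antisymm ?_ ?_
  · refine Metric.diam_le_of_forall_dist_le (by norm_num) fun x hx y hy => ?_
    calc dist x y = ‖x - y‖ := dist_eq_norm x y
      _ ≤ ‖x‖ + ‖y‖ := norm_sub_le x y
      _ ≤ 2 := by linarith [hsub x hx, hsub y hy]
  · refine le_of_forall_pos_le_add fun η hη => ?_
    obtain ⟨a, ha, b, hbS, hab⟩ := h η hη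
    have := Metric.dist_le_diam_of_mem hb ha hbS
    linarith

/-- Octahedrality of the dual implies the strong diameter 2 property. -/
lemma aux_backward (hoct : Octahedral (StrongDual ℝ X)) : StrongDiameterTwoProp X := by
  intro n lam f α hlam hsum hf hα
  rcases Nat.eq_zero_or_pos n with hn | hn
  · subst hn; simp at hsum
  haveI : Nonempty (Fin n) := ⟨⟨0, hn⟩⟩
  refine aux_diam_eq_two _ ?_ ?_
  · rintro x ⟨g, hg, rfl⟩
    exact aux_combo_norm_le hlam hsum fun i => (hg i).1
  intro η hη
  -- choose small ε'
  set αmin : ℝ := Finset.univ.inf' Finset.univ_nonempty α with hαmin_def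
  have hαmin : 0 < αmin := by
    rw [hαmin_def, Finset.lt_inf'_iff]
    exact fun i _ => hα i
  have hαmin_le : ∀ i, αmin ≤ α i := fun i => Finset.inf'_le _ (Finset.mem_univ i)
  set ε' : ℝ := min (αmin / 4) (η / 12) with hε'_def
  have hε' : 0 < ε' := lt_min (by positivity) (by positivity)
  have hε'α : ∀ i, 3 * ε' < α i := fun i => by
    have h1 : ε' ≤ αmin / 4 := min_le_left _ _
    have := hαmin_le i
    linarith
  have hε'η : 6 * ε' ≤ η := by
    have : ε' ≤ η / 12 := min_le_right _ _
    linarith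
  -- octahedrality applied to the span of the f i
  set E : Subspace ℝ (StrongDual ℝ X) := Submodule.span ℝ (Set.range f) with hE_def
  haveI : FiniteDimensional ℝ E := FiniteDimensional.span_of_finite ℝ (Set.finite_range f)
  obtain ⟨g, hg1, hgE⟩ := hoct E inferInstance ε' hε'
  have hfE : ∀ i, (f i : StrongDual ℝ X) ∈ E :=
    fun i => Submodule.subset_span (Set.mem_range_self i)
  -- find points in the slices on which g is large / small
  have hy : ∀ i, ∃ y : X, ‖y‖ ≤ 1 ∧ 1 - α i < f i y ∧ 1 - 3 * ε' < g y := by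
    intro i
    have h1 : (2 : ℝ) - 3 * ε' < ‖f i + g‖ := by
      have h2 := hgE (f i) (hfE i)
      rw [hf i, hg1] at h2
      nlinarith
    obtain ⟨x, hx, hfx⟩ := (f i + g).exists_lt_apply_of_lt_opNorm h1
    rw [Real.norm_eq_abs] at hfx
    have hxle : ‖x‖ ≤ 1 := hx.le
    rcases le_or_gt 0 ((f i + g) x) with hpos | hneg
    · rw [abs_of_nonneg hpos, ContinuousLinearMap.add_apply] at hfx
      have hgx : g x ≤ 1 := aux_apply_le_one hg1.le hxle
      have hfx1 : f i x ≤ 1 := aux_apply_le_one (hf i).le hxle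
      exact ⟨x, hxle, by linarith [hε'α i], by linarith⟩
    · rw [abs_of_neg hneg, ContinuousLinearMap.add_apply] at hfx
      have hgx : -1 ≤ g x := aux_neg_one_le hg1.le hxle
      have hfx1 : -1 ≤ f i x := aux_neg_one_le (hf i).le hxle
      refine ⟨-x, by simpa using hxle, ?_, ?_⟩
      · rw [map_neg]; linarith [hε'α i]
      · rw [map_neg]; linarith
  have hz : ∀ i, ∃ z : X, ‖z‖ ≤ 1 ∧ 1 - α i < f i z ∧ g z < -(1 - 3 * ε') := by
    intro i
    have h1 : (2 : ℝ) - 3 * ε' < ‖-f i + g‖ := by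
      have h2 := hgE (-(f i)) (neg_mem (hfE i))
      rw [norm_neg, hf i, hg1] at h2
      nlinarith
    obtain ⟨x, hx, hfx⟩ := (-f i + g).exists_lt_apply_of_lt_opNorm h1
    rw [Real.norm_eq_abs] at hfx
    have hxle : ‖x‖ ≤ 1 := hx.le
    rcases le_or_gt 0 ((-f i + g) x) with hpos | hneg
    · rw [abs_of_nonneg hpos, ContinuousLinearMap.add_apply, ContinuousLinearMap.neg_apply] at hfx
      have hgx : g x ≤ 1 := aux_apply_le_one hg1.le hxle
      have hfx1 : -1 ≤ f i x := aux_neg_one_le (hf i).le hxle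
      refine ⟨-x, by simpa using hxle, ?_, ?_⟩
      · rw [map_neg]; linarith [hε'α i]
      · rw [map_neg]; linarith
    · rw [abs_of_neg hneg, ContinuousLinearMap.add_apply, ContinuousLinearMap.neg_apply] at hfx
      have hgx : -1 ≤ g x := aux_neg_one_le hg1.le hxle
      have hfx1 : f i x ≤ 1 := aux_apply_le_one (hf i).le hxle
      exact ⟨x, hxle, by linarith [hε'α i], by linarith⟩
  choose y hy1 hy2 hy3 using hy
  choose z hz1 hz2 hz3 using hz
  refine ⟨∑ i, lam i • y i, ⟨y, fun i => ⟨hy1 i, hy2 i⟩, rfl⟩,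
    ∑ i, lam i • z i, ⟨z, fun i => ⟨hz1 i, hz2 i⟩, rfl⟩, ?_⟩
  set a := ∑ i, lam i • y i with ha_def
  set b := ∑ i, lam i • z i with hb_def
  have hga : g a = ∑ i, lam i * g (y i) := by
    rw [ha_def, map_sum]; simp [smul_eq_mul]
  have hgb : g b = ∑ i, lam i * g (z i) := by
    rw [hb_def, map_sum]; simp [smul_eq_mul]
  have hkey : 2 - 6 * ε' ≤ g a - g b := by
    have : g a - g b = ∑ i, lam i * (g (y i) - g (z i)) := by
      rw [hga, hgb, ← Finset.sum_sub_distrib]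
      exact Finset.sum_congr rfl fun i _ => by ring
    rw [this]
    calc (2 : ℝ) - 6 * ε' = ∑ i, lam i * (2 - 6 * ε') := by
          rw [← Finset.sum_mul, hsum, one_mul]
      _ ≤ ∑ i, lam i * (g (y i) - g (z i)) := by
          refine Finset.sum_le_sum fun i _ => ?_
          have := hy3 i; have := hz3 i
          exact mul_le_mul_of_nonneg_left (by linarith) (hlam i)
  have hgab : g (a - b) ≤ dist a b := by
    calc g (a - b) ≤ |g (a - b)| := le_abs_self _
      _ = ‖g (a - b)‖ := (Real.norm_eq_abs _).symm
      _ ≤ ‖g‖ * ‖a - b‖ := g.le_opNorm _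
      _ = dist a b := by rw [hg1, one_mul, dist_eq_norm]
  rw [map_sub] at hgab
  linarith

set_option maxHeartbeats 1000000 in
/-- The strong diameter 2 property implies octahedrality of the dual. -/
lemma aux_forward [Nontrivial X] (h : StrongDiameterTwoProp X) :
    Octahedral (StrongDual ℝ X) := by
  intro E hE ε hε
  haveI := hE
  obtain ⟨x0, hx0⟩ := exists_ne (0 : X)
  obtain ⟨g0, hg01, -⟩ := exists_dual_vector ℝ x0 (norm_ne_zero_iff.2 hx0)
  set ε' : ℝ := min ε (1 / 2) with hε'_def
  have hε'pos : 0 < ε' := lt_min hε (by norm_num)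
  have hε'le : ε' ≤ 1 / 2 := min_le_right _ _
  have hε'ε : ε' ≤ ε := min_le_left _ _
  suffices hsuff : ∃ g : StrongDual ℝ X, ‖g‖ = 1 ∧
      ∀ f ∈ E, (1 - ε') * (‖f‖ + 1) ≤ ‖f + g‖ by
    obtain ⟨g, hg1, hgE⟩ := hsuff
    refine ⟨g, hg1, fun f hf => ?_⟩
    rw [hg1]
    calc (1 - ε) * (‖f‖ + 1) ≤ (1 - ε') * (‖f‖ + 1) :=
          mul_le_mul_of_nonneg_right (by linarith) (by positivity)
      _ ≤ ‖f + g‖ := hgE f hf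
  by_cases htriv : ∀ f ∈ E, f = (0 : StrongDual ℝ X)
  · refine ⟨g0, hg01, fun f hf => ?_⟩
    rw [htriv f hf]
    simp only [norm_zero, zero_add, hg01]
    nlinarith
  push_neg at htriv
  obtain ⟨f1, hf1E, hf1⟩ := htriv
  -- the unit sphere of E, as a subset of the dual, is compact
  set K : Set (StrongDual ℝ X) := {h | h ∈ E ∧ ‖h‖ = 1} with hK_def
  have hKcomp : IsCompact K := by
    have h1 : IsCompact (Metric.sphere (0 : E) 1) := isCompact_sphere 0 1
    have h2 : IsCompact (Subtype.val '' Metric.sphere (0 : E) 1) :=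
      h1.image continuous_subtype_val
    convert h2 using 1
    ext v
    constructor
    · rintro ⟨hv, hvn⟩
      refine ⟨⟨v, hv⟩, ?_, rfl⟩
      simp [Metric.mem_sphere, dist_zero_right, Submodule.coe_norm, hvn]
    · rintro ⟨⟨v, hv⟩, hvs, rfl⟩
      refine ⟨hv, ?_⟩
      simpa [Metric.mem_sphere, dist_zero_right, Submodule.coe_norm] using hvs
  set δ₀ : ℝ := ε' / 2 with hδ₀_def
  have hδ₀ : 0 < δ₀ := by positivity
  have hf1' : ‖f1‖⁻¹ • f1 ∈ K := by
    constructor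
    · exact E.smul_mem _ hf1E
    · rw [norm_smul, norm_inv, norm_norm, inv_mul_cancel₀ (norm_ne_zero_iff.2 hf1)]
  -- a finite δ₀-net of K
  have hnetex : ∃ (n : ℕ) (e : Fin n → StrongDual ℝ X), 0 < n ∧
      (∀ i, e i ∈ K) ∧ ∀ v ∈ K, ∃ i, dist v (e i) < δ₀ := by
    have hcover : K ⊆ ⋃ c ∈ K, Metric.ball c δ₀ :=
      fun v hv => Set.mem_iUnion₂.2 ⟨v, hv, Metric.mem_ball_self hδ₀⟩
    obtain ⟨b', hb'K, hb'fin, hcov⟩ :=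
      hKcomp.elim_finite_subcover_image (fun c _ => Metric.isOpen_ball) hcover
    haveI := hb'fin.fintype
    have hb'ne : Nonempty b' := by
      obtain ⟨c, hcb, -⟩ := Set.mem_iUnion₂.1 (hcov hf1')
      exact ⟨⟨c, hcb⟩⟩
    refine ⟨Fintype.card b', fun i => ((Fintype.equivFin b').symm i : StrongDual ℝ X),
      Fintype.card_pos_iff.2 hb'ne, fun i => hb'K ((Fintype.equivFin b').symm i).2, ?_⟩
    intro v hv
    obtain ⟨c, hcb, hcball⟩ := Set.mem_iUnion₂.1 (hcov hv)
    refine ⟨Fintype.equivFin b' ⟨c, hcb⟩, ?_⟩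
    simpa [Equiv.symm_apply_apply] using Metric.mem_ball.1 hcball
  obtain ⟨n, e, hn, heK, hnet⟩ := hnetex
  have hnpos : (0 : ℝ) < n := by exact_mod_cast hn
  have hnne : (n : ℝ) ≠ 0 := hnpos.ne'
  have hn1 : (1 : ℝ) ≤ (n : ℝ) := by exact_mod_cast hn
  have h2n : (0 : ℝ) < 2 * ((n : ℝ) + 1) := by positivity
  set δ : ℝ := ε' / (2 * ((n : ℝ) + 1)) with hδ_def
  have hδpos : 0 < δ := div_pos hε'pos h2n
  have hδeq : δ * (2 * ((n : ℝ) + 1)) = ε' := by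
    rw [hδ_def, div_mul_cancel₀ _ h2n.ne']
  have hδ1 : δ + δ₀ ≤ ε' := by rw [hδ₀_def]; nlinarith [hδpos.le]
  have hδ2 : (n : ℝ) * δ ≤ ε' := by nlinarith [hδpos.le]
  have hδsmall : δ < 2 := by nlinarith [hδ₀, hε'le, hδpos.le]
  -- apply the SD2P
  have hsumone : ∑ _i : Fin n, (n : ℝ)⁻¹ = 1 := by
    rw [Finset.sum_const, Finset.card_univ, Fintype.card_fin, nsmul_eq_mul,
      mul_inv_cancel₀ hnne]
  have hdiam := h n (fun _ => (n : ℝ)⁻¹) e (fun _ => δ)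
    (fun _ => by positivity) hsumone (fun i => (heK i).2) (fun _ => hδpos)
  -- extract two far apart points
  obtain ⟨p, ⟨y, hy, hp⟩, q, ⟨w, hw, hq⟩, hpq⟩ :=
    aux_exists_far (r := 2 - δ) hdiam (by linarith) (by linarith)
  have hpn : ‖p‖ ≤ 1 := by
    rw [hp]
    exact aux_combo_norm_le (lam := fun _ => (n : ℝ)⁻¹) (gg := y)
      (fun _ => by positivity) hsumone (fun i => (hy i).1)
  have hqn : ‖q‖ ≤ 1 := by
    rw [hq]
    exact aux_combo_norm_le (lam := fun _ => (n : ℝ)⁻¹) (gg := w)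
      (fun _ => by positivity) hsumone (fun i => (hw i).1)
  have hpqne : p - q ≠ 0 := by
    intro hc
    rw [dist_eq_norm, hc] at hpq
    simp at hpq
    linarith
  obtain ⟨g, hg1, hgpq⟩ := exists_dual_vector ℝ (p - q) (norm_ne_zero_iff.2 hpqne)
  have hgpq2 : g (p - q) = dist p q := by rw [dist_eq_norm]; exact_mod_cast hgpq
  have hgq : -1 ≤ g q := aux_neg_one_le hg1.le hqn
  have hgp : 1 - δ < g p := by
    have : g p - g q = dist p q := by rw [← hgpq2, map_sub]
    linarith
  -- coordinatewise lower bound for g on the y i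
  have hgyi : ∀ i, 1 - (n : ℝ) * δ ≤ g (y i) := by
    intro i
    have hgpsum : g p = ∑ j, (n : ℝ)⁻¹ * g (y j) := by
      rw [hp, map_sum]; simp [smul_eq_mul]
    have hterm : ∀ j, (n : ℝ)⁻¹ * g (y j) ≤ (n : ℝ)⁻¹ := fun j => by
      have := aux_apply_le_one hg1.le (hy j).1
      nlinarith [inv_nonneg.2 hnpos.le]
    have herase : ∑ j ∈ Finset.univ.erase i, (n : ℝ)⁻¹ * g (y j) ≤ 1 - (n : ℝ)⁻¹ := by
      calc ∑ j ∈ Finset.univ.erase i, (n : ℝ)⁻¹ * g (y j)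
          ≤ ∑ _j ∈ Finset.univ.erase i, (n : ℝ)⁻¹ :=
            Finset.sum_le_sum fun j _ => hterm j
        _ = 1 - (n : ℝ)⁻¹ := by
            rw [Finset.sum_erase_eq_sub (Finset.mem_univ i)]
            rw [hsumone]
    have hsplit : (n : ℝ)⁻¹ * g (y i) + ∑ j ∈ Finset.univ.erase i, (n : ℝ)⁻¹ * g (y j)
        = ∑ j, (n : ℝ)⁻¹ * g (y j) :=
      Finset.add_sum_erase Finset.univ (fun j => (n : ℝ)⁻¹ * g (y j)) (Finset.mem_univ i)
    have hlow : (n : ℝ)⁻¹ - δ ≤ (n : ℝ)⁻¹ * g (y i) := by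
      have : 1 - δ < (n : ℝ)⁻¹ * g (y i) + (1 - (n : ℝ)⁻¹) := by
        rw [hgpsum] at hgp
        linarith [hsplit, herase]
      linarith
    have hkey := mul_le_mul_of_nonneg_left hlow hnpos.le
    have hni : (n : ℝ) * (n : ℝ)⁻¹ = 1 := mul_inv_cancel₀ hnne
    nlinarith [hkey, hni]
  -- conclude
  refine ⟨g, hg1, fun f hf => ?_⟩
  by_cases hf0 : f = 0
  · rw [hf0]
    simp only [norm_zero, zero_add, hg1]
    nlinarith [hε'pos]
  have hfn : (0 : ℝ) < ‖f‖ := norm_pos_iff.2 hf0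
  set f' : StrongDual ℝ X := ‖f‖⁻¹ • f with hf'_def
  have hf'K : f' ∈ K := by
    constructor
    · exact E.smul_mem _ hf
    · rw [norm_smul, norm_inv, norm_norm, inv_mul_cancel₀ hfn.ne']
  obtain ⟨i, hdistc⟩ := hnet f' hf'K
  rw [dist_eq_norm] at hdistc
  -- estimates at y i
  have hy1 := (hy i).1
  have hy2 : 1 - δ < e i (y i) := (hy i).2
  have hgyi' := hgyi i
  have hdiff : -δ₀ ≤ (f' - e i) (y i) := by
    have h1 : |(f' - e i) (y i)| ≤ ‖f' - e i‖ * ‖y i‖ := by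
      rw [← Real.norm_eq_abs]; exact (f' - e i).le_opNorm _
    have h2 : ‖f' - e i‖ * ‖y i‖ ≤ δ₀ := by
      nlinarith [norm_nonneg (y i), norm_nonneg (f' - e i)]
    linarith [neg_abs_le ((f' - e i) (y i))]
  have hf'y : 1 - δ - δ₀ ≤ f' (y i) := by
    have : f' (y i) = e i (y i) + (f' - e i) (y i) := by
      simp [ContinuousLinearMap.sub_apply]
    linarith
  have hfy : f (y i) = ‖f‖ * f' (y i) := by
    rw [hf'_def]
    simp [ContinuousLinearMap.smul_apply, smul_eq_mul]
    field_simp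
  have hupper : f (y i) + g (y i) ≤ ‖f + g‖ := by
    calc f (y i) + g (y i) = (f + g) (y i) := by simp
      _ ≤ |(f + g) (y i)| := le_abs_self _
      _ ≤ ‖f + g‖ * ‖y i‖ := by rw [← Real.norm_eq_abs]; exact (f + g).le_opNorm _
      _ ≤ ‖f + g‖ := mul_le_of_le_one_right (norm_nonneg _) hy1
  have hmain : (1 - ε') * (‖f‖ + 1) ≤ f (y i) + g (y i) := by
    rw [hfy]
    have h1 : (1 - δ - δ₀) ≤ f' (y i) := hf'y
    have h2 : ‖f‖ * (1 - δ - δ₀) ≤ ‖f‖ * f' (y i) :=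
      mul_le_mul_of_nonneg_left h1 hfn.le
    nlinarith [hδ1, hδ2, hfn.le, hgyi', hδpos.le, hδ₀.le]
  linarith

end Aux

theorem stmt_10 (X : Type*) [NormedAddCommGroup X] [NormedSpace ℝ X] [CompleteSpace X] [Nontrivial X] :
    StrongDiameterTwoProp X ↔ Octahedral (StrongDual ℝ X) := by
  exact ⟨fun h => aux_forward h, fun h => aux_backward h⟩
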